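/- arXiv:2107.02062 — 2 statements merged into one kernel-verified Lean document; each statement's English description precedes it below -/
import Mathlib

section
/- Let Γ be any lattice in G, i.e. a subgroup of G which is discrete as a subset of ℝ⁵ and for which the quotient space G/Γ is compact. Then there exists a group automorphism φ of G which is also a homeomorphism of ℝ⁵ such that φ(Γ) ⊆ Γ₀. -/
/-- The simply connected nilpotent Lie group of type `(2,3,5)` in exponential
coordinates: the underlying set is `ℝ⁵`. -/
@[ext]
structure G235 where
  a : ℝ
  b : ℝ
  c : ℝ
  d : ℝ
  e : ℝ

namespace G235

/-- The Baker–Campbell–Hausdorff multiplication. -/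
noncomputable instance : Mul G235 :=
  ⟨fun x y =>
    ⟨x.a + y.a, x.b + y.b,
      x.c + y.c + (x.a * y.b - x.b * y.a) / 2,
      x.d + y.d + (x.a * y.c - x.c * y.a) / 2 + (x.a - y.a) * (x.a * y.b - x.b * y.a) / 12,
      x.e + y.e + (x.b * y.c - x.c * y.b) / 2 + (x.b - y.b) * (x.a * y.b - x.b * y.a) / 12⟩⟩

instance : One G235 := ⟨⟨0, 0, 0, 0, 0⟩⟩

noncomputable instance : Inv G235 := ⟨fun x => ⟨-x.a, -x.b, -x.c, -x.d, -x.e⟩⟩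

@[simp] lemma mul_a (x y : G235) : (x * y).a = x.a + y.a := rfl
@[simp] lemma mul_b (x y : G235) : (x * y).b = x.b + y.b := rfl
@[simp] lemma mul_c (x y : G235) :
    (x * y).c = x.c + y.c + (x.a * y.b - x.b * y.a) / 2 := rfl
@[simp] lemma mul_d (x y : G235) :
    (x * y).d = x.d + y.d + (x.a * y.c - x.c * y.a) / 2 +
      (x.a - y.a) * (x.a * y.b - x.b * y.a) / 12 := rfl
@[simp] lemma mul_e (x y : G235) :
    (x * y).e = x.e + y.e + (x.b * y.c - x.c * y.b) / 2 +
      (x.b - y.b) * (x.a * y.b - x.b * y.a) / 12 := rfl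
@[simp] lemma one_a : (1 : G235).a = 0 := rfl
@[simp] lemma one_b : (1 : G235).b = 0 := rfl
@[simp] lemma one_c : (1 : G235).c = 0 := rfl
@[simp] lemma one_d : (1 : G235).d = 0 := rfl
@[simp] lemma one_e : (1 : G235).e = 0 := rfl
@[simp] lemma inv_a (x : G235) : x⁻¹.a = -x.a := rfl
@[simp] lemma inv_b (x : G235) : x⁻¹.b = -x.b := rfl
@[simp] lemma inv_c (x : G235) : x⁻¹.c = -x.c := rfl
@[simp] lemma inv_d (x : G235) : x⁻¹.d = -x.d := rfl
@[simp] lemma inv_e (x : G235) : x⁻¹.e = -x.e := rfl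

/-- The BCH multiplication makes `G235` a group with identity `0` and inverse `-x`. -/
noncomputable instance : Group G235 where
  mul_assoc x y z := by ext <;> simp <;> ring
  one_mul x := by ext <;> simp
  mul_one x := by ext <;> simp
  inv_mul_cancel x := by ext <;> simp <;> ring

/-- `G235` carries the Euclidean topology of `ℝ⁵`. -/
instance : TopologicalSpace G235 :=
  TopologicalSpace.induced (fun x => (x.a, x.b, x.c, x.d, x.e)) inferInstance

/-- The generator `e₁ = (1,0,0,0,0)`. -/
noncomputable def e1 : G235 := ⟨1, 0, 0, 0, 0⟩

/-- The generator `e₂ = (0,1,0,0,0)`. -/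
noncomputable def e2 : G235 := ⟨0, 1, 0, 0, 0⟩

end G235
namespace G235

@[simp] lemma mk_a (a b c d e : ℝ) : (G235.mk a b c d e).a = a := rfl
@[simp] lemma mk_b (a b c d e : ℝ) : (G235.mk a b c d e).b = b := rfl
@[simp] lemma mk_c (a b c d e : ℝ) : (G235.mk a b c d e).c = c := rfl
@[simp] lemma mk_d (a b c d e : ℝ) : (G235.mk a b c d e).d = d := rfl
@[simp] lemma mk_e (a b c d e : ℝ) : (G235.mk a b c d e).e = e := rfl

/-- The `GL₂`-type graded automorphism. -/
noncomputable def phiA (p q r s : ℝ) (h : p * s - q * r ≠ 0) : G235 ≃* G235 where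
  toFun x := ⟨p * x.a + q * x.b, r * x.a + s * x.b, (p * s - q * r) * x.c,
    (p * s - q * r) * (p * x.d + q * x.e), (p * s - q * r) * (r * x.d + s * x.e)⟩
  invFun y := ⟨(s * y.a - q * y.b) / (p * s - q * r), (-r * y.a + p * y.b) / (p * s - q * r),
    y.c / (p * s - q * r), (s * y.d - q * y.e) / (p * s - q * r) ^ 2,
    (-r * y.d + p * y.e) / (p * s - q * r) ^ 2⟩
  left_inv x := by ext <;> field_simp (disch := grind) <;> ring
  right_inv y := by ext <;> field_simp (disch := grind) <;> ring
  map_mul' x y := by ext <;> simp <;> ring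

@[simp] lemma phiA_apply (p q r s : ℝ) (h : p * s - q * r ≠ 0) (x : G235) :
    phiA p q r s h x = ⟨p * x.a + q * x.b, r * x.a + s * x.b, (p * s - q * r) * x.c,
      (p * s - q * r) * (p * x.d + q * x.e), (p * s - q * r) * (r * x.d + s * x.e)⟩ := rfl

/-- The "shift" automorphism. -/
noncomputable def phiS (P Q R P' Q' R' : ℝ) : G235 ≃* G235 where
  toFun x := ⟨x.a, x.b, x.c + P * x.a + P' * x.b,
    x.d + Q * x.a + Q' * x.b + P' * x.c, x.e + R * x.a + R' * x.b - P * x.c⟩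
  invFun y := ⟨y.a, y.b, y.c - P * y.a - P' * y.b,
    y.d - Q * y.a - Q' * y.b - P' * (y.c - P * y.a - P' * y.b),
    y.e - R * y.a - R' * y.b + P * (y.c - P * y.a - P' * y.b)⟩
  left_inv x := by ext <;> simp <;> ring
  right_inv y := by ext <;> simp <;> ring
  map_mul' x y := by ext <;> simp <;> ring

@[simp] lemma phiS_apply (P Q R P' Q' R' : ℝ) (x : G235) :
    phiS P Q R P' Q' R' x = ⟨x.a, x.b, x.c + P * x.a + P' * x.b,
      x.d + Q * x.a + Q' * x.b + P' * x.c, x.e + R * x.a + R' * x.b - P * x.c⟩ := rfl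

lemma npow_e1 (n : ℕ) : e1 ^ n = ⟨n, 0, 0, 0, 0⟩ := by
  induction n with
  | zero => ext <;> simp
  | succ n ih => rw [pow_succ, ih]; ext <;> simp [e1] <;> push_cast <;> ring

lemma zpow_e1 (n : ℤ) : e1 ^ n = ⟨n, 0, 0, 0, 0⟩ := by
  cases n with
  | ofNat m => rw [Int.ofNat_eq_coe, zpow_natCast, npow_e1]; norm_num
  | negSucc m =>
      rw [zpow_negSucc, npow_e1]
      ext <;> simp [Int.negSucc_eq] <;> push_cast <;> ring

lemma npow_e2 (n : ℕ) : e2 ^ n = ⟨0, n, 0, 0, 0⟩ := by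
  induction n with
  | zero => ext <;> simp
  | succ n ih => rw [pow_succ, ih]; ext <;> simp [e2] <;> push_cast <;> ring

lemma zpow_e2 (n : ℤ) : e2 ^ n = ⟨0, n, 0, 0, 0⟩ := by
  cases n with
  | ofNat m => rw [Int.ofNat_eq_coe, zpow_natCast, npow_e2]; norm_num
  | negSucc m =>
      rw [zpow_negSucc, npow_e2]
      ext <;> simp [Int.negSucc_eq] <;> push_cast <;> ring

lemma npow_G2 (c d e : ℝ) (n : ℕ) :
    (⟨0, 0, c, d, e⟩ : G235) ^ n = ⟨0, 0, n * c, n * d, n * e⟩ := by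
  induction n with
  | zero => ext <;> simp
  | succ n ih => rw [pow_succ, ih]; ext <;> simp <;> push_cast <;> ring

lemma zpow_G2 (c d e : ℝ) (n : ℤ) :
    (⟨0, 0, c, d, e⟩ : G235) ^ n = ⟨0, 0, n * c, n * d, n * e⟩ := by
  cases n with
  | ofNat m => rw [Int.ofNat_eq_coe, zpow_natCast, npow_G2]; norm_num
  | negSucc m =>
      rw [zpow_negSucc, npow_G2]
      ext <;> simp [Int.negSucc_eq] <;> push_cast <;> ring

end G235
namespace G235

lemma comm_a (x y : G235) : (x * y * x⁻¹ * y⁻¹).a = 0 := by simp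
lemma comm_b (x y : G235) : (x * y * x⁻¹ * y⁻¹).b = 0 := by simp
lemma comm_c (x y : G235) : (x * y * x⁻¹ * y⁻¹).c = x.a * y.b - x.b * y.a := by simp; ring

lemma comm_G2 (x y : G235) (ha : y.a = 0) (hb : y.b = 0) :
    x * y * x⁻¹ * y⁻¹ = ⟨0, 0, 0, x.a * y.c, x.b * y.c⟩ := by
  ext <;> simp [ha, hb] <;> ring

lemma reduce_eq (γ : G235) :
    γ * (⟨0, -γ.b, 0, 0, 0⟩ : G235) * (⟨-γ.a, 0, 0, 0, 0⟩ : G235) =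
      ⟨0, 0, γ.c - γ.a * γ.b / 2, γ.d + γ.a * γ.c / 2 - γ.a ^ 2 * γ.b / 3,
        γ.e + γ.b * γ.c / 2 - γ.a * γ.b ^ 2 / 6⟩ := by
  ext <;> simp <;> ring

/-- Any point with coordinates `(12A, 12B, 12C, D, E)`, `A B C D E` integers, lies in `Γ₀`. -/
lemma mem_gamma0 (A B C D E : ℤ) :
    (⟨12 * A, 12 * B, 12 * C, D, E⟩ : G235) ∈ Subgroup.closure ({e1, e2} : Set G235) := by
  have he1 : e1 ∈ Subgroup.closure ({e1, e2} : Set G235) :=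
    Subgroup.subset_closure (by simp)
  have he2 : e2 ∈ Subgroup.closure ({e1, e2} : Set G235) :=
    Subgroup.subset_closure (by simp)
  have hc3 : e1 * e2 * e1⁻¹ * e2⁻¹ ∈ Subgroup.closure ({e1, e2} : Set G235) :=
    mul_mem (mul_mem (mul_mem he1 he2) (inv_mem he1)) (inv_mem he2)
  have hc3' : e1 * e2 * e1⁻¹ * e2⁻¹ = (⟨0, 0, 1, 1/2, 1/2⟩ : G235) := by
    ext <;> simp [e1, e2] <;> norm_num
  rw [hc3'] at hc3
  have hc4 : e1 * (⟨0, 0, 1, 1/2, 1/2⟩ : G235) * e1⁻¹ * (⟨0, 0, 1, 1/2, 1/2⟩ : G235)⁻¹ ∈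
      Subgroup.closure ({e1, e2} : Set G235) :=
    mul_mem (mul_mem (mul_mem he1 hc3) (inv_mem he1)) (inv_mem hc3)
  have hc5 : e2 * (⟨0, 0, 1, 1/2, 1/2⟩ : G235) * e2⁻¹ * (⟨0, 0, 1, 1/2, 1/2⟩ : G235)⁻¹ ∈
      Subgroup.closure ({e1, e2} : Set G235) :=
    mul_mem (mul_mem (mul_mem he2 hc3) (inv_mem he2)) (inv_mem hc3)
  have hc4' : e1 * (⟨0, 0, 1, 1/2, 1/2⟩ : G235) * e1⁻¹ * (⟨0, 0, 1, 1/2, 1/2⟩ : G235)⁻¹ =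
      (⟨0, 0, 0, 1, 0⟩ : G235) := by ext <;> simp [e1] <;> norm_num
  have hc5' : e2 * (⟨0, 0, 1, 1/2, 1/2⟩ : G235) * e2⁻¹ * (⟨0, 0, 1, 1/2, 1/2⟩ : G235)⁻¹ =
      (⟨0, 0, 0, 0, 1⟩ : G235) := by ext <;> simp [e2] <;> norm_num
  rw [hc4'] at hc4; rw [hc5'] at hc5
  have key : (⟨12 * A, 12 * B, 12 * C, D, E⟩ : G235) =
      e1 ^ (12 * A) * e2 ^ (12 * B) * (⟨0, 0, 1, 1/2, 1/2⟩ : G235) ^ (12 * C - 72 * A * B) *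
        (⟨0, 0, 0, 1, 0⟩ : G235) ^ (D - 144 * A ^ 2 * B - (12 * A + 1) * (6 * C - 36 * A * B)) *
        (⟨0, 0, 0, 0, 1⟩ : G235) ^ (E + 144 * A * B ^ 2 - (12 * B + 1) * (6 * C - 36 * A * B)) := by
    rw [zpow_e1, zpow_e2, zpow_G2, zpow_G2, zpow_G2]
    ext <;> simp <;> push_cast <;> ring
  rw [key]
  exact mul_mem (mul_mem (mul_mem (mul_mem (zpow_mem he1 _) (zpow_mem he2 _))
    (zpow_mem hc3 _)) (zpow_mem hc4 _)) (zpow_mem hc5 _)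

end G235
namespace G235

/-- The coordinate embedding. -/
def emb (x : G235) : ℝ × ℝ × ℝ × ℝ × ℝ := (x.a, x.b, x.c, x.d, x.e)

lemma continuous_emb : Continuous emb := continuous_induced_dom

lemma continuous_coord_a : Continuous G235.a := continuous_fst.comp continuous_emb
lemma continuous_coord_b : Continuous G235.b :=
  (continuous_fst.comp continuous_snd).comp continuous_emb
lemma continuous_coord_c : Continuous G235.c :=
  (continuous_fst.comp (continuous_snd.comp continuous_snd)).comp continuous_emb
lemma continuous_coord_d : Continuous G235.d :=
  (continuous_fst.comp (continuous_snd.comp (continuous_snd.comp continuous_snd))).comp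
    continuous_emb
lemma continuous_coord_e : Continuous G235.e :=
  (continuous_snd.comp (continuous_snd.comp (continuous_snd.comp continuous_snd))).comp
    continuous_emb

lemma continuous_mk5 {X : Type*} [TopologicalSpace X] {f1 f2 f3 f4 f5 : X → ℝ}
    (h1 : Continuous f1) (h2 : Continuous f2) (h3 : Continuous f3) (h4 : Continuous f4)
    (h5 : Continuous f5) : Continuous fun x => (⟨f1 x, f2 x, f3 x, f4 x, f5 x⟩ : G235) :=
  continuous_induced_rng.2 (h1.prodMk (h2.prodMk (h3.prodMk (h4.prodMk h5))))

/-- The small coordinate box around `1`. -/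
def smallSet (ε : ℝ) : Set G235 :=
  {y | |y.a| < ε ∧ |y.b| < ε ∧ |y.c| < ε ∧ |y.d| < ε ∧ |y.e| < ε}

lemma emb_one : emb (1 : G235) = 0 := by
  simp only [emb, one_a, one_b, one_c, one_d, one_e]
  rfl

lemma mem_smallSet_of_dist {ε : ℝ} {y : G235} (h : dist (emb y) (emb 1) < ε) :
    y ∈ smallSet ε := by
  rw [emb_one] at h
  simp only [emb, Prod.dist_eq, Real.dist_eq, max_lt_iff, Prod.fst_zero, Prod.snd_zero,
    sub_zero] at h
  exact ⟨h.1, h.2.1, h.2.2.1, h.2.2.2.1, h.2.2.2.2⟩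

lemma dist_of_mem_smallSet {ε : ℝ} {y : G235} (h : y ∈ smallSet ε) (hε : 0 < ε) :
    dist (emb y) (emb 1) < ε := by
  rw [emb_one]
  obtain ⟨h1, h2, h3, h4, h5⟩ := h
  simp only [emb, Prod.dist_eq, Real.dist_eq, max_lt_iff, Prod.fst_zero, Prod.snd_zero,
    sub_zero]
  exact ⟨h1, h2, h3, h4, h5⟩

lemma smallSet_mem_nhds {ε : ℝ} (hε : 0 < ε) : smallSet ε ∈ nhds (1 : G235) := by
  rw [nhds_induced]
  refine Filter.mem_comap.2 ⟨Metric.ball (emb 1) ε, Metric.ball_mem_nhds _ hε, ?_⟩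
  intro y hy
  exact mem_smallSet_of_dist hy

lemma exists_smallSet_subset {U : Set G235} (hU : U ∈ nhds (1 : G235)) :
    ∃ ε > 0, smallSet ε ⊆ U := by
  rw [nhds_induced, Filter.mem_comap] at hU
  obtain ⟨W, hW, hWU⟩ := hU
  obtain ⟨ε, hε, hball⟩ := Metric.mem_nhds_iff.1 hW
  refine ⟨ε, hε, fun y hy => hWU (hball (dist_of_mem_smallSet hy hε))⟩

/-- The discreteness constant for a discrete subgroup. -/
lemma exists_eps (Γ : Subgroup G235) (hdisc : DiscreteTopology Γ) :
    ∃ ε > 0, ∀ γ ∈ Γ, γ ∈ smallSet ε → γ = 1 := by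
  have h1 : ({(⟨1, Γ.one_mem⟩ : Γ)} : Set Γ) = (Subtype.val) ⁻¹' {x | x ∈ smallSet 1 → x = 1} →
      True := fun _ => trivial
  have hopen : IsOpen ({(⟨1, Γ.one_mem⟩ : Γ)} : Set Γ) := isOpen_discrete _
  rw [isOpen_induced_iff] at hopen
  obtain ⟨U, hU, hUeq⟩ := hopen
  have hmem : U ∈ nhds (1 : G235) := by
    refine hU.mem_nhds ?_
    have : (⟨1, Γ.one_mem⟩ : Γ) ∈ Subtype.val ⁻¹' U := by rw [hUeq]; exact rfl
    exact this
  obtain ⟨ε, hε, hsub⟩ := exists_smallSet_subset hmem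
  refine ⟨ε, hε, fun γ hγ hsmall => ?_⟩
  have : (⟨γ, hγ⟩ : Γ) ∈ Subtype.val ⁻¹' U := hsub hsmall
  rw [hUeq] at this
  simpa using congrArg Subtype.val this

/-- Transfer the discreteness constant through a bicontinuous automorphism. -/
lemma eps_transfer (Γ : Subgroup G235) (φ : G235 ≃* G235) (hφs : Continuous ⇑φ.symm)
    (h : ∃ ε > 0, ∀ γ ∈ Γ, γ ∈ smallSet ε → γ = 1) :
    ∃ ε > 0, ∀ γ ∈ Γ.map φ.toMonoidHom, γ ∈ smallSet ε → γ = 1 := by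
  obtain ⟨ε₀, hε₀, h0⟩ := h
  have hcont : ContinuousAt (⇑φ.symm) 1 := hφs.continuousAt
  have hU : (⇑φ.symm) ⁻¹' (smallSet ε₀) ∈ nhds (1 : G235) := by
    have := hcont.preimage_mem_nhds (by rw [map_one]; exact smallSet_mem_nhds hε₀)
    exact this
  obtain ⟨ε, hε, hsub⟩ := exists_smallSet_subset hU
  refine ⟨ε, hε, fun γ hγ hsmall => ?_⟩
  obtain ⟨γ₀, hγ₀, rfl⟩ := Subgroup.mem_map.1 hγ
  have : φ.symm (φ γ₀) ∈ smallSet ε₀ := hsub hsmall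
  rw [MulEquiv.symm_apply_apply] at this
  have := h0 γ₀ hγ₀ this
  rw [this, map_one]

end G235
namespace G235

/-- No continuous surjective "additive character" of `G` can vanish on a cocompact subgroup. -/
lemma no_invariant_functional (Γ : Subgroup G235) (hcpt : CompactSpace (G235 ⧸ Γ))
    (F : G235 → ℝ) (hFc : Continuous F) (hhom : ∀ x y, F (x * y) = F x + F y)
    (hvan : ∀ γ ∈ Γ, F γ = 0) (hsurj : Function.Surjective F) : False := by
  have hresp : ∀ a b : G235, @Setoid.r _ (QuotientGroup.leftRel Γ) a b → F a = F b := by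
    intro a b hab
    have h : a⁻¹ * b ∈ Γ := (QuotientGroup.leftRel_apply).1 hab
    have : F b = F a + F (a⁻¹ * b) := by
      rw [← hhom]; congr 1; group
    rw [this, hvan _ h, add_zero]
  let Fbar : G235 ⧸ Γ → ℝ := Quotient.lift F hresp
  have hFbarc : Continuous Fbar := continuous_quot_lift _ hFc
  have hFbars : Function.Surjective Fbar := by
    intro t
    obtain ⟨x, hx⟩ := hsurj t
    exact ⟨QuotientGroup.mk x, hx⟩
  have hcomp : IsCompact (Set.range Fbar) := isCompact_range hFbarc
  rw [Set.range_eq_univ.2 hFbars] at hcomp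
  exact noncompact_univ ℝ hcomp

/-- The projection of a cocompact subgroup to the abelianization contains two
independent vectors. -/
lemma exists_indep (Γ : Subgroup G235) (hcpt : CompactSpace (G235 ⧸ Γ)) :
    ∃ u v : G235, u ∈ Γ ∧ v ∈ Γ ∧ u.a * v.b - u.b * v.a ≠ 0 := by
  by_contra hno
  push_neg at hno
  by_cases hz : ∀ γ ∈ Γ, γ.a = 0 ∧ γ.b = 0
  · refine no_invariant_functional Γ hcpt (fun x => x.a) continuous_coord_a
      (fun x y => by simp) (fun γ hγ => (hz γ hγ).1) (fun t => ⟨⟨t, 0, 0, 0, 0⟩, rfl⟩)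
  · push_neg at hz
    obtain ⟨δ, hδ, hδ0⟩ := hz
    have hd : δ.a ^ 2 + δ.b ^ 2 ≠ 0 := by
      intro h
      have h1 : δ.a = 0 := by nlinarith [sq_nonneg δ.a, sq_nonneg δ.b]
      have h2 : δ.b = 0 := by nlinarith [sq_nonneg δ.a, sq_nonneg δ.b]
      exact hδ0 h1 h2
    refine no_invariant_functional Γ hcpt (fun x => δ.a * x.b - δ.b * x.a)
      ((continuous_const.mul continuous_coord_b).sub
        (continuous_const.mul continuous_coord_a)) (fun x y => by simp; ring) (fun γ hγ => hno δ γ hδ hγ) ?_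
    intro t
    refine ⟨⟨-t * δ.b / (δ.a ^ 2 + δ.b ^ 2), t * δ.a / (δ.a ^ 2 + δ.b ^ 2), 0, 0, 0⟩, ?_⟩
    field_simp
    ring

end G235
namespace G235

lemma proj_discrete (Γ : Subgroup G235)
    (heps : ∃ ε > 0, ∀ γ ∈ Γ, γ ∈ smallSet ε → γ = 1)
    (hind : ∃ u v : G235, u ∈ Γ ∧ v ∈ Γ ∧ u.a * v.b - u.b * v.a ≠ 0) :
    ∃ ε1 > 0, ∀ γ ∈ Γ, |γ.a| < ε1 → |γ.b| < ε1 → γ.a = 0 ∧ γ.b = 0 := by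
  obtain ⟨ε₀, hε₀, h0⟩ := heps
  obtain ⟨δ, δ', hδ, hδ', hD0⟩ := hind
  set C : ℝ := |δ.a| + |δ.b| + |δ'.a| + |δ'.b| + 1 with hC
  set C2 : ℝ := |δ.a| + |δ.b| + 1 with hC2
  have hCpos : (1:ℝ) ≤ C := by
    rw [hC]; have := abs_nonneg δ.a; have := abs_nonneg δ.b
    have := abs_nonneg δ'.a; have := abs_nonneg δ'.b; linarith
  have hC2pos : (1:ℝ) ≤ C2 := by
    rw [hC2]; have := abs_nonneg δ.a; have := abs_nonneg δ.b; linarith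
  refine ⟨ε₀ / (4 * C * C2), by apply div_pos hε₀; nlinarith, fun γ hγ ha hb => ?_⟩
  by_contra hne
  -- first, a nonzero commutator value exists
  have step : ∀ w, w ∈ Γ → |w.a| + |w.b| ≤ C → γ.a * w.b - γ.b * w.a ≠ 0 → False := by
    intro w hw hwC hm
    set m : ℝ := γ.a * w.b - γ.b * w.a with hmdef
    have hσ : γ * w * γ⁻¹ * w⁻¹ ∈ Γ :=
      mul_mem (mul_mem (mul_mem hγ hw) (inv_mem hγ)) (inv_mem hw)
    set σ : G235 := γ * w * γ⁻¹ * w⁻¹ with hσdef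
    have hσa : σ.a = 0 := comm_a _ _
    have hσb : σ.b = 0 := comm_b _ _
    have hσc : σ.c = m := comm_c _ _
    have hτΓ : δ * σ * δ⁻¹ * σ⁻¹ ∈ Γ :=
      mul_mem (mul_mem (mul_mem hδ hσ) (inv_mem hδ)) (inv_mem hσ)
    have hτ : δ * σ * δ⁻¹ * σ⁻¹ = ⟨0, 0, 0, δ.a * m, δ.b * m⟩ := by
      rw [comm_G2 δ σ hσa hσb, hσc]
    rw [hτ] at hτΓ
    have hmb : |m| ≤ ε₀ / (4 * C * C2) * C := by
      have h1 : |m| ≤ |γ.a| * |w.b| + |γ.b| * |w.a| := by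
        rw [hmdef]
        calc |γ.a * w.b - γ.b * w.a| ≤ |γ.a * w.b| + |γ.b * w.a| := abs_sub _ _
        _ = |γ.a| * |w.b| + |γ.b| * |w.a| := by rw [abs_mul, abs_mul]
      have h2 : |γ.a| * |w.b| + |γ.b| * |w.a| ≤ ε₀ / (4 * C * C2) * (|w.a| + |w.b|) := by
        have := abs_nonneg w.a
        have := abs_nonneg w.b
        have := abs_nonneg γ.a
        have := abs_nonneg γ.b
        nlinarith
      have h3 : ε₀ / (4 * C * C2) * (|w.a| + |w.b|) ≤ ε₀ / (4 * C * C2) * C :=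
        mul_le_mul_of_nonneg_left hwC (by positivity)
      linarith
    have hbound : ∀ t : ℝ, |t| ≤ C2 → |t * m| < ε₀ := by
      intro t ht
      have h4 : |t * m| ≤ C2 * (ε₀ / (4 * C * C2) * C) := by
        rw [abs_mul]
        have := abs_nonneg m
        have h5 : |m| ≥ 0 := this
        nlinarith [abs_nonneg t]
      have h6 : C2 * (ε₀ / (4 * C * C2) * C) = ε₀ / 4 := by field_simp
      rw [h6] at h4
      linarith
    have hsmall : (⟨0, 0, 0, δ.a * m, δ.b * m⟩ : G235) ∈ smallSet ε₀ := by
      refine ⟨?_, ?_, ?_, ?_, ?_⟩ <;> simp only [mk_a, mk_b, mk_c, mk_d, mk_e, abs_zero]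
      · exact hε₀
      · exact hε₀
      · exact hε₀
      · exact hbound δ.a (by rw [hC2]; have := abs_nonneg δ.b; linarith)
      · exact hbound δ.b (by rw [hC2]; have := abs_nonneg δ.a; linarith)
    have h1 := h0 _ hτΓ hsmall
    have hda : δ.a * m = 0 := by
      have := congrArg G235.d h1; simpa using this
    have hdb : δ.b * m = 0 := by
      have := congrArg G235.e h1; simpa using this
    have hda' : δ.a = 0 := by
      rcases mul_eq_zero.1 hda with h | h
      · exact h
      · exact absurd h hm
    have hdb' : δ.b = 0 := by
      rcases mul_eq_zero.1 hdb with h | h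
      · exact h
      · exact absurd h hm
    apply hD0
    rw [hda', hdb']; ring
  have hm12 : γ.a * δ.b - γ.b * δ.a ≠ 0 ∨ γ.a * δ'.b - γ.b * δ'.a ≠ 0 := by
    by_contra hh
    push_neg at hh
    obtain ⟨h1, h2⟩ := hh
    apply hne
    constructor
    · have : γ.a * (δ.a * δ'.b - δ.b * δ'.a) = 0 := by linear_combination δ.a * h2 - δ'.a * h1
      rcases mul_eq_zero.1 this with h | h
      · exact h
      · exact absurd h hD0
    · have : γ.b * (δ.a * δ'.b - δ.b * δ'.a) = 0 := by linear_combination δ.b * h2 - δ'.b * h1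
      rcases mul_eq_zero.1 this with h | h
      · exact h
      · exact absurd h hD0
  rcases hm12 with h | h
  · exact step δ hδ (by rw [hC]; have := abs_nonneg δ'.a; have := abs_nonneg δ'.b; linarith) h
  · exact step δ' hδ' (by rw [hC]; have := abs_nonneg δ.a; have := abs_nonneg δ.b; linarith) h

end G235
namespace G235

/-- A discrete cocompact-type subgroup of `ℝ²` has an integral basis. -/
lemma exists_zbasis (Λ : AddSubgroup (ℝ × ℝ))
    (hdisc : ∃ ε > 0, ∀ w ∈ Λ, dist w (0 : ℝ × ℝ) < ε → w = 0)
    (hspan : ∃ u v : ℝ × ℝ, u ∈ Λ ∧ v ∈ Λ ∧ u.1 * v.2 - u.2 * v.1 ≠ 0) :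
    ∃ u v : ℝ × ℝ, u ∈ Λ ∧ v ∈ Λ ∧ u.1 * v.2 - u.2 * v.1 ≠ 0 ∧
      ∀ w ∈ Λ, ∃ m n : ℤ, w.1 = m * u.1 + n * v.1 ∧ w.2 = m * u.2 + n * v.2 := by
  obtain ⟨ε, hε, heps⟩ := hdisc
  obtain ⟨u₀, v₀, hu₀, hv₀, hD⟩ := hspan
  set Λ' : Submodule ℤ (ℝ × ℝ) := AddSubgroup.toIntSubmodule Λ with hΛ'
  have hmemiff : ∀ w : ℝ × ℝ, w ∈ Λ' ↔ w ∈ Λ := fun w => Iff.rfl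
  have hdisc' : DiscreteTopology Λ' := by
    rw [discreteTopology_iff_isOpen_singleton]
    intro x
    have : ({x} : Set Λ') = (Subtype.val) ⁻¹' (Metric.ball (x : ℝ × ℝ) ε) := by
      ext y
      simp only [Set.mem_singleton_iff, Set.mem_preimage, Metric.mem_ball]
      constructor
      · rintro rfl; exact mod_cast Metric.mem_ball_self hε
      · intro hy
        have hmem : (↑y - ↑x : ℝ × ℝ) ∈ Λ := sub_mem ((hmemiff _).1 y.2) ((hmemiff _).1 x.2)
        have : (↑y - ↑x : ℝ × ℝ) = 0 := by
          apply heps _ hmem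
          rw [dist_eq_norm, sub_zero, ← dist_eq_norm]
          exact hy
        exact Subtype.ext (by rwa [sub_eq_zero] at this)
    rw [this]
    exact Metric.isOpen_ball.preimage continuous_subtype_val
  have hspan' : IsZLattice ℝ Λ' := by
    constructor
    rw [Submodule.eq_top_iff']
    intro x
    have key : x = ((x.1 * v₀.2 - x.2 * v₀.1) / (u₀.1 * v₀.2 - u₀.2 * v₀.1)) • u₀ +
        ((u₀.1 * x.2 - u₀.2 * x.1) / (u₀.1 * v₀.2 - u₀.2 * v₀.1)) • v₀ := by
      have : ∀ y : ℝ × ℝ, y = (y.1, y.2) := fun y => rfl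
      rw [Prod.ext_iff]
      constructor
      · simp only [Prod.fst_add, Prod.smul_fst, smul_eq_mul]
        field_simp (disch := grind)
        ring
      · simp only [Prod.snd_add, Prod.smul_snd, smul_eq_mul]
        field_simp (disch := grind)
        ring
    rw [key]
    exact Submodule.add_mem _
      (Submodule.smul_mem _ _ (Submodule.subset_span ((hmemiff _).2 hu₀)))
      (Submodule.smul_mem _ _ (Submodule.subset_span ((hmemiff _).2 hv₀)))
  have hfree : Module.Free ℤ Λ' := inferInstance
  have hfin : Module.Finite ℤ Λ' := inferInstance
  let b₀ := Module.Free.chooseBasis ℤ Λ'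
  have hcard : Fintype.card (Module.Free.ChooseBasisIndex ℤ Λ') = 2 := by
    rw [← Module.finrank_eq_card_chooseBasisIndex, ZLattice.rank ℝ Λ']
    rw [Module.finrank_prod, Module.finrank_self]
  let b := b₀.reindex (Fintype.equivFinOfCardEq hcard)
  set u : ℝ × ℝ := ((b 0 : Λ') : ℝ × ℝ) with hu
  set v : ℝ × ℝ := ((b 1 : Λ') : ℝ × ℝ) with hv
  have humem : u ∈ Λ := (hmemiff _).1 (b 0).2
  have hvmem : v ∈ Λ := (hmemiff _).1 (b 1).2
  -- independence
  have hbR := (b.ofZLatticeBasis ℝ Λ').linearIndependent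
  rw [linearIndependent_fin2] at hbR
  obtain ⟨hv0, hnosmul⟩ := hbR
  have hbR0 : (b.ofZLatticeBasis ℝ Λ') 0 = u := by rw [Module.Basis.ofZLatticeBasis_apply]
  have hbR1 : (b.ofZLatticeBasis ℝ Λ') 1 = v := by rw [Module.Basis.ofZLatticeBasis_apply]
  have hDuv : u.1 * v.2 - u.2 * v.1 ≠ 0 := by
    intro hzero
    rw [hbR1] at hv0
    have hvne : v.1 ≠ 0 ∨ v.2 ≠ 0 := by
      by_contra hh
      push_neg at hh
      exact hv0 (Prod.ext hh.1 hh.2)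
    rcases hvne with h1 | h2
    · refine hnosmul (u.1 / v.1) ?_
      rw [hbR0, hbR1]
      apply Prod.ext
      · simp only [Prod.smul_fst, smul_eq_mul]; field_simp
      · simp only [Prod.smul_snd, smul_eq_mul]; field_simp; nlinarith [hzero]
    · refine hnosmul (u.2 / v.2) ?_
      rw [hbR0, hbR1]
      apply Prod.ext
      · simp only [Prod.smul_fst, smul_eq_mul]; field_simp; nlinarith [hzero]
      · simp only [Prod.smul_snd, smul_eq_mul]; field_simp
  refine ⟨u, v, humem, hvmem, hDuv, fun w hw => ?_⟩
  set x : Λ' := ⟨w, (hmemiff _).2 hw⟩ with hx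
  have hrepr := b.sum_repr x
  rw [Fin.sum_univ_two] at hrepr
  refine ⟨b.repr x 0, b.repr x 1, ?_, ?_⟩
  · have h := congrArg (fun z : Λ' => (z : ℝ × ℝ).1) hrepr
    simp only [Submodule.coe_add, SetLike.val_smul, Prod.smul_fst, zsmul_eq_mul] at h
    exact h.symm
  · have h := congrArg (fun z : Λ' => (z : ℝ × ℝ).2) hrepr
    simp only [Submodule.coe_add, SetLike.val_smul, Prod.smul_snd, zsmul_eq_mul] at h
    exact h.symm

end G235
namespace G235

lemma c3_eq : e1 * e2 * e1⁻¹ * e2⁻¹ = (⟨0, 0, 1, 1/2, 1/2⟩ : G235) := by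
  ext <;> simp [e1, e2] <;> norm_num

lemma mem_c3 {S : Subgroup G235} (h1 : e1 ∈ S) (h2 : e2 ∈ S) :
    (⟨0, 0, 1, 1/2, 1/2⟩ : G235) ∈ S := by
  rw [← c3_eq]
  exact mul_mem (mul_mem (mul_mem h1 h2) (inv_mem h1)) (inv_mem h2)

lemma mem_c4 {S : Subgroup G235} (h1 : e1 ∈ S) (h2 : e2 ∈ S) :
    (⟨0, 0, 0, 1, 0⟩ : G235) ∈ S := by
  have hc3 := mem_c3 h1 h2
  have : e1 * (⟨0, 0, 1, 1/2, 1/2⟩ : G235) * e1⁻¹ * (⟨0, 0, 1, 1/2, 1/2⟩ : G235)⁻¹ =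
      (⟨0, 0, 0, 1, 0⟩ : G235) := by ext <;> simp [e1] <;> norm_num
  rw [← this]
  exact mul_mem (mul_mem (mul_mem h1 hc3) (inv_mem h1)) (inv_mem hc3)

lemma mem_c5 {S : Subgroup G235} (h1 : e1 ∈ S) (h2 : e2 ∈ S) :
    (⟨0, 0, 0, 0, 1⟩ : G235) ∈ S := by
  have hc3 := mem_c3 h1 h2
  have : e2 * (⟨0, 0, 1, 1/2, 1/2⟩ : G235) * e2⁻¹ * (⟨0, 0, 1, 1/2, 1/2⟩ : G235)⁻¹ =
      (⟨0, 0, 0, 0, 1⟩ : G235) := by ext <;> simp [e2] <;> norm_num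
  rw [← this]
  exact mul_mem (mul_mem (mul_mem h2 hc3) (inv_mem h2)) (inv_mem hc3)

lemma mem_G3 {S : Subgroup G235} (h1 : e1 ∈ S) (h2 : e2 ∈ S) (m n : ℤ) :
    (⟨0, 0, 0, m, n⟩ : G235) ∈ S := by
  have h4 := zpow_mem (mem_c4 h1 h2) m
  have h5 := zpow_mem (mem_c5 h1 h2) n
  rw [zpow_G2] at h4 h5
  have := mul_mem h4 h5
  have heq : (⟨0, 0, (m:ℝ) * 0, m * 1, m * 0⟩ : G235) * ⟨0, 0, (n:ℝ) * 0, n * 0, n * 1⟩ =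
      (⟨0, 0, 0, m, n⟩ : G235) := by ext <;> simp
  rwa [heq] at this

/-- Continuity of `phiA` and its inverse. -/
lemma phiA_continuous (p q r s : ℝ) (h : p * s - q * r ≠ 0) :
    Continuous ⇑(phiA p q r s h) :=
  continuous_mk5 ((continuous_const.mul continuous_coord_a).add
      (continuous_const.mul continuous_coord_b))
    ((continuous_const.mul continuous_coord_a).add (continuous_const.mul continuous_coord_b))
    (continuous_const.mul continuous_coord_c)
    (continuous_const.mul ((continuous_const.mul continuous_coord_d).add
      (continuous_const.mul continuous_coord_e)))
    (continuous_const.mul ((continuous_const.mul continuous_coord_d).add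
      (continuous_const.mul continuous_coord_e)))

lemma phiA_symm_continuous (p q r s : ℝ) (h : p * s - q * r ≠ 0) :
    Continuous ⇑(phiA p q r s h).symm :=
  continuous_mk5
    (((continuous_const.mul continuous_coord_a).sub
      (continuous_const.mul continuous_coord_b)).div_const _)
    (((continuous_const.mul continuous_coord_a).add
      (continuous_const.mul continuous_coord_b)).div_const _)
    (continuous_coord_c.div_const _)
    (((continuous_const.mul continuous_coord_d).sub
      (continuous_const.mul continuous_coord_e)).div_const _)
    (((continuous_const.mul continuous_coord_d).add
      (continuous_const.mul continuous_coord_e)).div_const _)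

lemma phiS_continuous (P Q R P' Q' R' : ℝ) : Continuous ⇑(phiS P Q R P' Q' R') :=
  continuous_mk5 continuous_coord_a continuous_coord_b
    ((continuous_coord_c.add (continuous_const.mul continuous_coord_a)).add
      (continuous_const.mul continuous_coord_b))
    (((continuous_coord_d.add (continuous_const.mul continuous_coord_a)).add
      (continuous_const.mul continuous_coord_b)).add (continuous_const.mul continuous_coord_c))
    (((continuous_coord_e.add (continuous_const.mul continuous_coord_a)).add
      (continuous_const.mul continuous_coord_b)).sub (continuous_const.mul continuous_coord_c))

lemma phiS_symm_continuous (P Q R P' Q' R' : ℝ) : Continuous ⇑(phiS P Q R P' Q' R').symm := by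
  have : ⇑(phiS P Q R P' Q' R').symm = fun y : G235 =>
      (⟨y.a, y.b, y.c - P * y.a - P' * y.b,
        y.d - Q * y.a - Q' * y.b - P' * (y.c - P * y.a - P' * y.b),
        y.e - R * y.a - R' * y.b + P * (y.c - P * y.a - P' * y.b)⟩ : G235) := rfl
  rw [this]
  have hc : Continuous fun y : G235 => y.c - P * y.a - P' * y.b :=
    (continuous_coord_c.sub (continuous_const.mul continuous_coord_a)).sub
      (continuous_const.mul continuous_coord_b)
  exact continuous_mk5 continuous_coord_a continuous_coord_b hc
    (((continuous_coord_d.sub (continuous_const.mul continuous_coord_a)).sub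
      (continuous_const.mul continuous_coord_b)).sub (continuous_const.mul hc))
    (((continuous_coord_e.sub (continuous_const.mul continuous_coord_a)).sub
      (continuous_const.mul continuous_coord_b)).add (continuous_const.mul hc))

end G235
open G235

/-- If `Γ` is a lattice in `G` (a subgroup which is discrete as a subset of `ℝ⁵` and whose
quotient `G/Γ` is compact), then there is a group automorphism of `G` which is also a
homeomorphism of `ℝ⁵` mapping `Γ` into `Γ₀`. -/
theorem stmt17 (Γ : Subgroup G235) (hdisc : DiscreteTopology Γ)
    (hcpt : CompactSpace (G235 ⧸ Γ)) :
    ∃ φ : G235 ≃* G235, Continuous φ ∧ Continuous φ.symm ∧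
      ∀ x ∈ Γ, φ x ∈ Subgroup.closure ({e1, e2} : Set G235) := by
  classical
  obtain ⟨ε₀, hε₀, heps0⟩ := exists_eps Γ hdisc
  obtain ⟨u₀, v₀, hu₀Γ, hv₀Γ, hD₀⟩ := exists_indep Γ hcpt
  -- the projection of Γ to the abelianization
  set Λ : AddSubgroup (ℝ × ℝ) :=
    { carrier := {p | ∃ γ ∈ Γ, γ.a = p.1 ∧ γ.b = p.2}
      zero_mem' := ⟨1, Γ.one_mem, rfl, rfl⟩
      add_mem' := by
        rintro p q ⟨γ, hγ, ha, hb⟩ ⟨γ', hγ', ha', hb'⟩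
        exact ⟨γ * γ', Γ.mul_mem hγ hγ', by simp [ha, ha'], by simp [hb, hb']⟩
      neg_mem' := by
        rintro p ⟨γ, hγ, ha, hb⟩
        exact ⟨γ⁻¹, Γ.inv_mem hγ, by simp [ha], by simp [hb]⟩ } with hΛdef
  have hΛmem : ∀ p : ℝ × ℝ, p ∈ Λ ↔ ∃ γ ∈ Γ, γ.a = p.1 ∧ γ.b = p.2 := fun p => Iff.rfl
  -- Λ is discrete
  obtain ⟨ε₁, hε₁, heps1⟩ := proj_discrete Γ ⟨ε₀, hε₀, heps0⟩ ⟨u₀, v₀, hu₀Γ, hv₀Γ, hD₀⟩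
  have hΛdisc : ∃ ε > 0, ∀ w ∈ Λ, dist w (0 : ℝ × ℝ) < ε → w = 0 := by
    refine ⟨ε₁, hε₁, fun w hw hd => ?_⟩
    obtain ⟨γ, hγ, ha, hb⟩ := (hΛmem w).1 hw
    rw [Prod.dist_eq, max_lt_iff, Real.dist_eq, Real.dist_eq] at hd
    simp only [Prod.fst_zero, Prod.snd_zero, sub_zero] at hd
    obtain ⟨h1, h2⟩ := heps1 γ hγ (by rw [ha]; exact hd.1) (by rw [hb]; exact hd.2)
    have : w = (w.1, w.2) := rfl
    rw [this, ← ha, ← hb, h1, h2]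
    rfl
  have hΛspan : ∃ u v : ℝ × ℝ, u ∈ Λ ∧ v ∈ Λ ∧ u.1 * v.2 - u.2 * v.1 ≠ 0 :=
    ⟨(u₀.a, u₀.b), (v₀.a, v₀.b), ⟨u₀, hu₀Γ, rfl, rfl⟩, ⟨v₀, hv₀Γ, rfl, rfl⟩, hD₀⟩
  obtain ⟨u, v, huΛ, hvΛ, hDuv, hrep⟩ := exists_zbasis Λ hΛdisc hΛspan
  -- the first automorphism, normalizing the projection to ℤ²
  have hdet1 : (v.2 / (u.1 * v.2 - u.2 * v.1)) * (u.1 / (u.1 * v.2 - u.2 * v.1)) -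
      (-v.1 / (u.1 * v.2 - u.2 * v.1)) * (-u.2 / (u.1 * v.2 - u.2 * v.1)) ≠ 0 := by
    have : (v.2 / (u.1 * v.2 - u.2 * v.1)) * (u.1 / (u.1 * v.2 - u.2 * v.1)) -
        (-v.1 / (u.1 * v.2 - u.2 * v.1)) * (-u.2 / (u.1 * v.2 - u.2 * v.1)) =
        1 / (u.1 * v.2 - u.2 * v.1) := by
      rw [div_mul_div_comm, div_mul_div_comm,
        div_sub_div _ _ (mul_ne_zero hDuv hDuv) (mul_ne_zero hDuv hDuv),
        div_eq_div_iff (mul_ne_zero (mul_ne_zero hDuv hDuv) (mul_ne_zero hDuv hDuv)) hDuv]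
      ring
    rw [this]
    exact one_div_ne_zero hDuv
  set φ₁ : G235 ≃* G235 := phiA _ _ _ _ hdet1 with hφ₁def
  set Γ₁ : Subgroup G235 := Γ.map φ₁.toMonoidHom with hΓ₁def
  have hab1 : ∀ x ∈ Γ₁, ∃ m n : ℤ, x.a = m ∧ x.b = n := by
    intro x hx
    obtain ⟨γ, hγ, rfl⟩ := Subgroup.mem_map.1 hx
    obtain ⟨m, n, ha, hb⟩ := hrep (γ.a, γ.b) ((hΛmem _).2 ⟨γ, hγ, rfl, rfl⟩)
    have ha' : γ.a = (m : ℝ) * u.1 + (n : ℝ) * v.1 := ha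
    have hb' : γ.b = (m : ℝ) * u.2 + (n : ℝ) * v.2 := hb
    refine ⟨m, n, ?_, ?_⟩
    · show (φ₁ γ).a = m
      rw [hφ₁def, phiA_apply, mk_a, ha', hb']
      field_simp (disch := grind)
      ring
    · show (φ₁ γ).b = n
      rw [hφ₁def, phiA_apply, mk_b, ha', hb']
      field_simp (disch := grind)
      ring
  obtain ⟨γu, hγu, hua, hub⟩ := (hΛmem u).1 huΛ
  obtain ⟨γv, hγv, hva, hvb⟩ := (hΛmem v).1 hvΛ
  set g1 : G235 := φ₁ γu with hg1def
  set g2 : G235 := φ₁ γv with hg2def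
  have hg1 : g1 ∈ Γ₁ := ⟨γu, hγu, rfl⟩
  have hg2 : g2 ∈ Γ₁ := ⟨γv, hγv, rfl⟩
  have hg1a : g1.a = 1 := by
    rw [hg1def, hφ₁def, phiA_apply, mk_a, hua, hub]
    field_simp (disch := grind)
    ring
  have hg1b : g1.b = 0 := by
    rw [hg1def, hφ₁def, phiA_apply, mk_b, hua, hub]
    field_simp (disch := grind)
    ring
  have hg2a : g2.a = 0 := by
    rw [hg2def, hφ₁def, phiA_apply, mk_a, hva, hvb]
    field_simp (disch := grind)
    ring
  have hg2b : g2.b = 1 := by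
    rw [hg2def, hφ₁def, phiA_apply, mk_b, hva, hvb]
    field_simp (disch := grind)
    ring
  -- the second automorphism, moving g1, g2 to e1, e2
  set φ₂ : G235 ≃* G235 := phiS (-g1.c) (-g1.d + g2.c * g1.c) (-g1.e - g1.c ^ 2)
    (-g2.c) (-g2.d + g2.c ^ 2) (-g2.e - g1.c * g2.c) with hφ₂def
  set Γ₂ : Subgroup G235 := Γ₁.map φ₂.toMonoidHom with hΓ₂def
  have he1mem : e1 ∈ Γ₂ := by
    refine ⟨g1, hg1, ?_⟩
    show φ₂ g1 = e1
    rw [hφ₂def, phiS_apply]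
    ext <;> simp [e1, hg1a, hg1b] <;> ring
  have he2mem : e2 ∈ Γ₂ := by
    refine ⟨g2, hg2, ?_⟩
    show φ₂ g2 = e2
    rw [hφ₂def, phiS_apply]
    ext <;> simp [e2, hg2a, hg2b] <;> ring
  have hab2 : ∀ x ∈ Γ₂, ∃ m n : ℤ, x.a = m ∧ x.b = n := by
    intro x hx
    obtain ⟨y, hy, rfl⟩ := Subgroup.mem_map.1 hx
    obtain ⟨m, n, ha, hb⟩ := hab1 y hy
    exact ⟨m, n, ha, hb⟩
  have heps2 : ∃ ε > 0, ∀ γ ∈ Γ₂, γ ∈ smallSet ε → γ = 1 := by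
    rw [hΓ₂def, hΓ₁def]
    exact eps_transfer _ φ₂ (by rw [hφ₂def]; exact phiS_symm_continuous _ _ _ _ _ _)
      (eps_transfer _ φ₁ (by rw [hφ₁def]; exact phiA_symm_continuous _ _ _ _ _) ⟨ε₀, hε₀, heps0⟩)
  obtain ⟨ε₂, hε₂, heps2'⟩ := heps2
  -- the central lattice
  set L : AddSubgroup (ℝ × ℝ) :=
    { carrier := {p | (⟨0, 0, 0, p.1, p.2⟩ : G235) ∈ Γ₂}
      zero_mem' := by
        show (⟨0, 0, 0, (0:ℝ), (0:ℝ)⟩ : G235) ∈ Γ₂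
        exact Γ₂.one_mem
      add_mem' := by
        intro p q hp hq
        have h := Γ₂.mul_mem hp hq
        have heq : (⟨0, 0, 0, p.1, p.2⟩ : G235) * ⟨0, 0, 0, q.1, q.2⟩ =
            ⟨0, 0, 0, p.1 + q.1, p.2 + q.2⟩ := by ext <;> simp
        rw [heq] at h
        exact h
      neg_mem' := by
        intro p hp
        have h := Γ₂.inv_mem hp
        have heq : (⟨0, 0, 0, p.1, p.2⟩ : G235)⁻¹ = ⟨0, 0, 0, -p.1, -p.2⟩ := by
          ext <;> simp
        rw [heq] at h
        exact h } with hLdef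
  have hLmem : ∀ p : ℝ × ℝ, p ∈ L ↔ (⟨0, 0, 0, p.1, p.2⟩ : G235) ∈ Γ₂ := fun p => Iff.rfl
  have hLdisc : ∃ ε > 0, ∀ w ∈ L, dist w (0 : ℝ × ℝ) < ε → w = 0 := by
    refine ⟨ε₂, hε₂, fun w hw hd => ?_⟩
    rw [Prod.dist_eq, max_lt_iff, Real.dist_eq, Real.dist_eq] at hd
    simp only [Prod.fst_zero, Prod.snd_zero, sub_zero] at hd
    have h1 := heps2' _ ((hLmem w).1 hw)
      ⟨by simpa using hε₂, by simpa using hε₂, by simpa using hε₂, by simpa using hd.1,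
        by simpa using hd.2⟩
    have hd0 : w.1 = 0 := by simpa using congrArg G235.d h1
    have he0 : w.2 = 0 := by simpa using congrArg G235.e h1
    have : w = (w.1, w.2) := rfl
    rw [this, hd0, he0]
    rfl
  have hLspan : ∃ u' v' : ℝ × ℝ, u' ∈ L ∧ v' ∈ L ∧ u'.1 * v'.2 - u'.2 * v'.1 ≠ 0 := by
    refine ⟨(1, 0), (0, 1), ?_, ?_, by norm_num⟩
    · show (⟨0, 0, 0, (1:ℝ), (0:ℝ)⟩ : G235) ∈ Γ₂
      have := mem_G3 he1mem he2mem 1 0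
      simpa using this
    · show (⟨0, 0, 0, (0:ℝ), (1:ℝ)⟩ : G235) ∈ Γ₂
      have := mem_G3 he1mem he2mem 0 1
      simpa using this
  obtain ⟨w0, w1, hw0L, hw1L, hDw, hLrep⟩ := exists_zbasis L hLdisc hLspan
  have h10L : ((1:ℝ), (0:ℝ)) ∈ L := by
    show (⟨0, 0, 0, (1:ℝ), (0:ℝ)⟩ : G235) ∈ Γ₂
    simpa using mem_G3 he1mem he2mem 1 0
  have h01L : ((0:ℝ), (1:ℝ)) ∈ L := by
    show (⟨0, 0, 0, (0:ℝ), (1:ℝ)⟩ : G235) ∈ Γ₂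
    simpa using mem_G3 he1mem he2mem 0 1
  obtain ⟨A1, B1, hA1, hB1⟩ := hLrep _ h10L
  obtain ⟨C1, D1, hC1, hD1⟩ := hLrep _ h01L
  have h11 : (A1:ℝ) * w0.1 + (B1:ℝ) * w1.1 = 1 := hA1.symm
  have h12 : (A1:ℝ) * w0.2 + (B1:ℝ) * w1.2 = 0 := hB1.symm
  have h21 : (C1:ℝ) * w0.1 + (D1:ℝ) * w1.1 = 0 := hC1.symm
  have h22 : (C1:ℝ) * w0.2 + (D1:ℝ) * w1.2 = 1 := hD1.symm
  set Δ : ℤ := A1 * D1 - B1 * C1 with hΔdef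
  have hΔ1 : ((Δ:ℤ):ℝ) * w0.1 = D1 := by
    rw [hΔdef]
    push_cast
    linear_combination (D1:ℝ) * h11 - (B1:ℝ) * h21
  have hΔ2 : ((Δ:ℤ):ℝ) * w0.2 = -B1 := by
    rw [hΔdef]
    push_cast
    linear_combination (D1:ℝ) * h12 - (B1:ℝ) * h22
  have hΔ3 : ((Δ:ℤ):ℝ) * w1.1 = -C1 := by
    rw [hΔdef]
    push_cast
    linear_combination (A1:ℝ) * h21 - (C1:ℝ) * h11
  have hΔ4 : ((Δ:ℤ):ℝ) * w1.2 = A1 := by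
    rw [hΔdef]
    push_cast
    linear_combination (A1:ℝ) * h22 - (C1:ℝ) * h12
  have hΔne : ((Δ:ℤ):ℝ) ≠ 0 := by
    intro h0
    have hD1' : (D1:ℝ) = 0 := by rw [← hΔ1, h0, zero_mul]
    have hB1' : (B1:ℝ) = 0 := by
      have := hΔ2
      rw [h0, zero_mul] at this
      linarith [this]
    have hC1' : (C1:ℝ) = 0 := by
      have := hΔ3
      rw [h0, zero_mul] at this
      linarith [this]
    have hA1' : (A1:ℝ) = 0 := by rw [← hΔ4, h0, zero_mul]
    rw [hA1', hB1'] at h11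
    simp at h11
  have hLint : ∀ w ∈ L, ∃ i j : ℤ, ((Δ:ℤ):ℝ) * w.1 = i ∧ ((Δ:ℤ):ℝ) * w.2 = j := by
    intro w hw
    obtain ⟨m, n, hm, hn⟩ := hLrep w hw
    refine ⟨m * D1 - n * C1, -(m * B1) + n * A1, ?_, ?_⟩
    · push_cast
      linear_combination ((Δ:ℤ):ℝ) * hm + (m:ℝ) * hΔ1 + (n:ℝ) * hΔ3
    · push_cast
      linear_combination ((Δ:ℤ):ℝ) * hn + (m:ℝ) * hΔ2 + (n:ℝ) * hΔ4
  -- the key integrality bound on Γ₂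
  have main : ∀ γ ∈ Γ₂, ∃ i1 i2 i3 i4 i5 : ℤ, γ.a = i1 ∧ γ.b = i2 ∧
      2 * ((Δ:ℤ):ℝ) * γ.c = i3 ∧ 12 * ((Δ:ℤ):ℝ)^2 * γ.d = i4 ∧
      12 * ((Δ:ℤ):ℝ)^2 * γ.e = i5 := by
    intro γ hγ
    obtain ⟨i1, i2, h1, h2⟩ := hab2 γ hγ
    have hmem2 : (⟨0, -γ.b, 0, 0, 0⟩ : G235) ∈ Γ₂ := by
      have he : e2 ^ (-i2 : ℤ) = ⟨0, -γ.b, 0, 0, 0⟩ := by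
        rw [zpow_e2]
        ext <;> simp [h2]
      rw [← he]
      exact zpow_mem he2mem _
    have hmem1 : (⟨-γ.a, 0, 0, 0, 0⟩ : G235) ∈ Γ₂ := by
      have he : e1 ^ (-i1 : ℤ) = ⟨-γ.a, 0, 0, 0, 0⟩ := by
        rw [zpow_e1]
        ext <;> simp [h1]
      rw [← he]
      exact zpow_mem he1mem _
    have hwΓ := Γ₂.mul_mem (Γ₂.mul_mem hγ hmem2) hmem1
    rw [reduce_eq] at hwΓ
    -- the c-coordinate is integral
    have hcommΓ := Γ₂.mul_mem (Γ₂.mul_mem (Γ₂.mul_mem he1mem hwΓ) (Γ₂.inv_mem he1mem))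
      (Γ₂.inv_mem hwΓ)
    rw [comm_G2 e1 _ rfl rfl] at hcommΓ
    have hcommΓ' : (⟨0, 0, 0, γ.c - γ.a * γ.b / 2, 0⟩ : G235) ∈ Γ₂ := by
      have heq : (⟨0, 0, 0, e1.a * (γ.c - γ.a * γ.b / 2), e1.b * (γ.c - γ.a * γ.b / 2)⟩ : G235)
          = ⟨0, 0, 0, γ.c - γ.a * γ.b / 2, 0⟩ := by ext <;> simp [e1]
      rwa [heq] at hcommΓ
    obtain ⟨i, _, hi, -⟩ := hLint (γ.c - γ.a * γ.b / 2, 0) ((hLmem _).2 hcommΓ')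
    have hi' : ((Δ:ℤ):ℝ) * (γ.c - γ.a * γ.b / 2) = i := hi
    -- the d, e coordinates are integral
    have hpow := zpow_mem hwΓ Δ
    rw [zpow_G2] at hpow
    have hc3m := zpow_mem (mem_c3 he1mem he2mem) (-i)
    rw [zpow_G2] at hc3m
    have hz := Γ₂.mul_mem hpow hc3m
    have hzeq : (⟨0, 0, ((Δ:ℤ):ℝ) * (γ.c - γ.a * γ.b / 2),
          ((Δ:ℤ):ℝ) * (γ.d + γ.a * γ.c / 2 - γ.a ^ 2 * γ.b / 3),
          ((Δ:ℤ):ℝ) * (γ.e + γ.b * γ.c / 2 - γ.a * γ.b ^ 2 / 6)⟩ : G235) *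
        ⟨0, 0, ((-i:ℤ):ℝ) * 1, ((-i:ℤ):ℝ) * (1/2), ((-i:ℤ):ℝ) * (1/2)⟩ =
        ⟨0, 0, 0, ((Δ:ℤ):ℝ) * (γ.d + γ.a * γ.c / 2 - γ.a ^ 2 * γ.b / 3) - (i:ℝ) / 2,
          ((Δ:ℤ):ℝ) * (γ.e + γ.b * γ.c / 2 - γ.a * γ.b ^ 2 / 6) - (i:ℝ) / 2⟩ := by
      ext
      · simp
      · simp
      · simp
        push_cast
        linear_combination hi'
      · simp
        push_cast
        ring
      · simp
        push_cast
        ring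
    rw [hzeq] at hz
    obtain ⟨i4', i5', hi4, hi5⟩ := hLint
      (((Δ:ℤ):ℝ) * (γ.d + γ.a * γ.c / 2 - γ.a ^ 2 * γ.b / 3) - (i:ℝ) / 2,
        ((Δ:ℤ):ℝ) * (γ.e + γ.b * γ.c / 2 - γ.a * γ.b ^ 2 / 6) - (i:ℝ) / 2) ((hLmem _).2 hz)
    have hi4' : ((Δ:ℤ):ℝ) * (((Δ:ℤ):ℝ) * (γ.d + γ.a * γ.c / 2 - γ.a ^ 2 * γ.b / 3) - (i:ℝ) / 2)
        = i4' := hi4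
    have hi5' : ((Δ:ℤ):ℝ) * (((Δ:ℤ):ℝ) * (γ.e + γ.b * γ.c / 2 - γ.a * γ.b ^ 2 / 6) - (i:ℝ) / 2)
        = i5' := hi5
    refine ⟨i1, i2, 2 * i + Δ * i1 * i2,
      12 * i4' + 6 * Δ * i - 6 * Δ * i1 * i + Δ^2 * i1^2 * i2,
      12 * i5' + 6 * Δ * i - 6 * Δ * i2 * i - Δ^2 * i1 * i2^2, h1, h2, ?_, ?_, ?_⟩
    · push_cast
      linear_combination 2 * hi' + ((Δ:ℤ):ℝ) * γ.a * h2 + ((Δ:ℤ):ℝ) * (i2:ℝ) * h1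
    · push_cast
      linear_combination 12 * hi4' + (-6) * ((Δ:ℤ):ℝ) * γ.a * hi' + ((Δ:ℤ):ℝ)^2 * γ.a^2 * h2 +
        (((Δ:ℤ):ℝ)^2 * (i2:ℝ) * (γ.a + (i1:ℝ)) - 6 * ((Δ:ℤ):ℝ) * (i:ℝ)) * h1
    · push_cast
      linear_combination 12 * hi5' + (-6) * ((Δ:ℤ):ℝ) * γ.b * hi' +
        (-((Δ:ℤ):ℝ)^2 * γ.a * (γ.b + (i2:ℝ)) - 6 * ((Δ:ℤ):ℝ) * (i:ℝ)) * h2 +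
        (-((Δ:ℤ):ℝ)^2 * (i2:ℝ)^2) * h1
  -- the final dilation
  have hnR : (24 * ((Δ:ℤ):ℝ)^2) * (24 * ((Δ:ℤ):ℝ)^2) - 0 * 0 ≠ 0 := by
    have := pow_ne_zero 2 hΔne
    intro h
    apply this
    nlinarith [sq_nonneg ((Δ:ℤ):ℝ)]
  set φ₃ : G235 ≃* G235 := phiA (24 * ((Δ:ℤ):ℝ)^2) 0 0 (24 * ((Δ:ℤ):ℝ)^2) hnR with hφ₃def
  refine ⟨(φ₁.trans φ₂).trans φ₃, ?_, ?_, ?_⟩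
  · have : ⇑((φ₁.trans φ₂).trans φ₃) = ⇑φ₃ ∘ ⇑φ₂ ∘ ⇑φ₁ := rfl
    rw [this, hφ₁def, hφ₂def, hφ₃def]
    exact (phiA_continuous _ _ _ _ _).comp
      ((phiS_continuous _ _ _ _ _ _).comp (phiA_continuous _ _ _ _ _))
  · have : ⇑((φ₁.trans φ₂).trans φ₃).symm = ⇑φ₁.symm ∘ ⇑φ₂.symm ∘ ⇑φ₃.symm := rfl
    rw [this, hφ₁def, hφ₂def, hφ₃def]
    exact (phiA_symm_continuous _ _ _ _ _).comp
      ((phiS_symm_continuous _ _ _ _ _ _).comp (phiA_symm_continuous _ _ _ _ _))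
  · intro x hx
    have hy : φ₂ (φ₁ x) ∈ Γ₂ := ⟨φ₁ x, ⟨x, hx, rfl⟩, rfl⟩
    set y : G235 := φ₂ (φ₁ x) with hydef
    obtain ⟨i1, i2, i3, i4, i5, hy1, hy2, hy3, hy4, hy5⟩ := main y hy
    have hfin : ((φ₁.trans φ₂).trans φ₃) x =
        ⟨12 * ((2 * Δ^2 * i1 : ℤ) : ℝ), 12 * ((2 * Δ^2 * i2 : ℤ) : ℝ),
          12 * ((24 * Δ^3 * i3 : ℤ) : ℝ), ((1152 * Δ^4 * i4 : ℤ) : ℝ),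
          ((1152 * Δ^4 * i5 : ℤ) : ℝ)⟩ := by
      have hstep : ((φ₁.trans φ₂).trans φ₃) x = φ₃ y := rfl
      rw [hstep, hφ₃def, phiA_apply]
      ext
      · simp only [mk_a]
        push_cast
        linear_combination (24 * ((Δ:ℤ):ℝ)^2) * hy1
      · simp only [mk_b]
        push_cast
        linear_combination (24 * ((Δ:ℤ):ℝ)^2) * hy2
      · simp only [mk_c]
        push_cast
        linear_combination (288 * ((Δ:ℤ):ℝ)^3) * hy3
      · simp only [mk_d]
        push_cast
        linear_combination (1152 * ((Δ:ℤ):ℝ)^4) * hy4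
      · simp only [mk_e]
        push_cast
        linear_combination (1152 * ((Δ:ℤ):ℝ)^4) * hy5
    rw [hfin]
    have := mem_gamma0 (2 * Δ^2 * i1) (2 * Δ^2 * i2) (24 * Δ^3 * i3) (1152 * Δ^4 * i4)
      (1152 * Δ^4 * i5)
    convert this using 2 <;> push_cast <;> ring
end

section
/- With the notation of the context, the telescoping identity ∏_q det(Δ_q)^{(−1)^q N_q} = ( ∏_q det(D_q^* D_q restricted to L^q)^{(−1)^q} )^{−κ} holds as an equality of positive real numbers. -/
open LinearMap

open LinearMap Module

lemma det_prodMap' {M₁ M₂ : Type*} [AddCommGroup M₁] [Module ℂ M₁] [FiniteDimensional ℂ M₁]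
    [AddCommGroup M₂] [Module ℂ M₂] [FiniteDimensional ℂ M₂]
    (f : M₁ →ₗ[ℂ] M₁) (g : M₂ →ₗ[ℂ] M₂) :
    LinearMap.det (f.prodMap g) = f.det * g.det := by
  classical
  let b₁ := Module.finBasis ℂ M₁
  let b₂ := Module.finBasis ℂ M₂
  rw [← LinearMap.det_toMatrix (b₁.prod b₂), LinearMap.toMatrix_prodMap,
    Matrix.det_fromBlocks_zero₂₁, LinearMap.det_toMatrix, LinearMap.det_toMatrix]

lemma det_isCompl' {V : Type*} [AddCommGroup V] [Module ℂ V] [FiniteDimensional ℂ V]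
    {p q : Submodule ℂ V} (h : IsCompl p q) (f : V →ₗ[ℂ] V)
    (hp : ∀ x ∈ p, f x ∈ p) (hq : ∀ x ∈ q, f x ∈ q) :
    f.det = (f.restrict hp).det * (f.restrict hq).det := by
  let e := Submodule.prodEquivOfIsCompl p q h
  have key : f = (e : p × q →ₗ[ℂ] V) ∘ₗ ((f.restrict hp).prodMap (f.restrict hq)) ∘ₗ
      (e.symm : V →ₗ[ℂ] p × q) := by
    apply LinearMap.ext; intro v
    obtain ⟨⟨x, y⟩, rfl⟩ := e.surjective v
    simp [e, LinearEquiv.symm_apply_apply, Submodule.coe_prodEquivOfIsCompl',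
      LinearMap.restrict_coe_apply, map_add]
  have h2 := LinearMap.det_conj ((f.restrict hp).prodMap (f.restrict hq)) e
  rw [← key] at h2
  rw [h2, det_prodMap']

variable {U V : Type*} [NormedAddCommGroup U] [InnerProductSpace ℂ U] [FiniteDimensional ℂ U]
  [NormedAddCommGroup V] [InnerProductSpace ℂ V] [FiniteDimensional ℂ V]

lemma ker_adjoint' (S : U →ₗ[ℂ] V) : ker (adjoint S) = (range S)ᗮ := by
  ext x
  simp only [LinearMap.mem_ker, Submodule.mem_orthogonal]
  constructor
  · rintro h _ ⟨y, rfl⟩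
    have : inner ℂ (adjoint S x) y = inner ℂ x (S y) := LinearMap.adjoint_inner_left S y x
    rw [h, inner_zero_left] at this
    rw [← inner_conj_symm, ← this, map_zero]
  · intro h
    have h0 : inner ℂ (adjoint S x) (adjoint S x) = 0 := by
      rw [LinearMap.adjoint_inner_left]
      rw [← inner_conj_symm]
      rw [h _ ⟨adjoint S x, rfl⟩, map_zero]
    exact inner_self_eq_zero.mp h0

lemma range_adjoint' (S : U →ₗ[ℂ] V) : range (adjoint S) = (ker S)ᗮ := by
  have h := ker_adjoint' (adjoint S)
  rw [LinearMap.adjoint_adjoint] at h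
  rw [h, Submodule.orthogonal_orthogonal]

lemma det_restrict_comm (S : U →ₗ[ℂ] V)
    (h1 : ∀ x ∈ range S, (S ∘ₗ adjoint S) x ∈ range S)
    (h2 : ∀ x ∈ range (adjoint S), (adjoint S ∘ₗ S) x ∈ range (adjoint S)) :
    LinearMap.det ((S ∘ₗ adjoint S).restrict h1) =
      LinearMap.det ((adjoint S ∘ₗ S).restrict h2) := by
  have hres : ∀ x ∈ range (adjoint S), S x ∈ range S := fun x _ => ⟨x, rfl⟩
  set φ : range (adjoint S) →ₗ[ℂ] range S := S.restrict hres with hφ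
  have hinj : Function.Injective φ := by
    rw [← LinearMap.ker_eq_bot]
    ext x
    simp only [LinearMap.mem_ker, Submodule.mem_bot]
    constructor
    · intro hx
      have hSx : S (x : U) = 0 := by
        have := congrArg (Subtype.val) hx
        simpa [φ, LinearMap.restrict_coe_apply] using this
      have hmem : (x : U) ∈ (ker S)ᗮ := by
        rw [← range_adjoint']; exact x.2
      have : inner ℂ ((x : U)) ((x : U)) = 0 := by
        rw [← inner_conj_symm,
          (Submodule.mem_orthogonal (ker S) (x : U)).mp hmem (x : U) (LinearMap.mem_ker.mpr hSx),
          map_zero]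
      exact Subtype.ext (inner_self_eq_zero.mp this)
    · rintro rfl; exact map_zero φ
  have hdim : finrank ℂ (range (adjoint S)) = finrank ℂ (range S) := by
    have e1 : finrank ℂ (ker S) + finrank ℂ ((ker S)ᗮ) = finrank ℂ U :=
      Submodule.finrank_add_finrank_orthogonal (ker S)
    have e2 : finrank ℂ (range S) + finrank ℂ (ker S) = finrank ℂ U :=
      LinearMap.finrank_range_add_finrank_ker S
    rw [range_adjoint']
    omega
  have hsurj := (LinearMap.injective_iff_surjective_of_finrank_eq_finrank hdim).mp hinj
  set e := LinearEquiv.ofBijective φ ⟨hinj, hsurj⟩ with he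
  have key : (S ∘ₗ adjoint S).restrict h1 =
      (e : range (adjoint S) →ₗ[ℂ] range S) ∘ₗ ((adjoint S ∘ₗ S).restrict h2) ∘ₗ
        (e.symm : range S →ₗ[ℂ] range (adjoint S)) := by
    apply LinearMap.ext; intro v
    obtain ⟨x, rfl⟩ := e.surjective v
    apply Subtype.ext
    have hev : ∀ y : range (adjoint S), ((e y : range S) : V) = S (y : U) := fun y => rfl
    simp only [LinearMap.comp_apply, LinearEquiv.coe_coe, LinearEquiv.symm_apply_apply,
      LinearMap.restrict_coe_apply, hev, LinearMap.comp_apply]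
  have h3 := LinearMap.det_conj ((adjoint S ∘ₗ S).restrict h2) e
  rw [← key] at h3
  exact h3

lemma det_pos_of_posdef {E : Type*} [NormedAddCommGroup E] [InnerProductSpace ℂ E]
    [FiniteDimensional ℂ E] {T : E →ₗ[ℂ] E} (hsym : T.IsSymmetric)
    (hpos : ∀ x : E, x ≠ 0 → 0 < Complex.re (inner ℂ (T x) x)) :
    ∃ r : ℝ, 0 < r ∧ LinearMap.det T = (r : ℂ) := by
  have hn : finrank ℂ E = finrank ℂ E := rfl
  set b := hsym.eigenvectorBasis hn with hb
  set μ := hsym.eigenvalues hn with hμ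
  have happ : ∀ i, T (b i) = (μ i : ℂ) • b i := hsym.apply_eigenvectorBasis hn
  have hmat : LinearMap.toMatrix b.toBasis b.toBasis T =
      Matrix.diagonal (fun i => (μ i : ℂ)) := by
    ext i j
    rw [LinearMap.toMatrix_apply]
    have hbj : b.toBasis j = b j := by rw [OrthonormalBasis.coe_toBasis]
    rw [hbj, happ, map_smul]
    have hbj2 : b j = b.toBasis j := by rw [OrthonormalBasis.coe_toBasis]
    rw [hbj2, Basis.repr_self]
    by_cases h : i = j
    · subst h; simp [Matrix.diagonal]
    · simp [Finsupp.single_apply, Matrix.diagonal_apply_ne _ h, Ne.symm h]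
  have hdet : LinearMap.det T = ∏ i, (μ i : ℂ) := by
    rw [← LinearMap.det_toMatrix b.toBasis, hmat, Matrix.det_diagonal]
  refine ⟨∏ i, μ i, ?_, by rw [hdet]; push_cast; rfl⟩
  apply Finset.prod_pos
  intro i _
  have hbne : b i ≠ 0 := by
    have := b.toBasis.ne_zero i
    rwa [OrthonormalBasis.coe_toBasis] at this
  have hp := hpos (b i) hbne
  rw [happ] at hp
  have hnorm : inner ℂ (b i) (b i) = 1 := by
    rw [inner_self_eq_norm_sq_to_K]
    rw [b.orthonormal.1 i]
    norm_num
  rw [inner_smul_left, hnorm, mul_one, Complex.conj_ofReal, Complex.ofReal_re] at hp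
  exact hp

section Delta
variable {W : Type*} [NormedAddCommGroup W] [InnerProductSpace ℂ W] [FiniteDimensional ℂ W]

lemma det_delta (S : U →ₗ[ℂ] V) (T : V →ₗ[ℂ] W)
    (hTS : T.comp S = 0) (hex : ker T = range S) {a b : ℕ} (ha : 0 < a) (hb : 0 < b)
    (hS : ∀ x ∈ range (adjoint S), ((adjoint S).comp S) x ∈ range (adjoint S))
    (hT : ∀ x ∈ range (adjoint T), ((adjoint T).comp T) x ∈ range (adjoint T)) :
    LinearMap.det ((S.comp (adjoint S)) ^ a + ((adjoint T).comp T) ^ b) =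
      LinearMap.det (((adjoint S).comp S).restrict hS) ^ a *
        LinearMap.det (((adjoint T).comp T).restrict hT) ^ b := by
  set f := S.comp (adjoint S) with hf
  set g := (adjoint T).comp T with hg
  set p := range S with hp
  set q := range (adjoint T) with hq
  have hq_eq : q = pᗮ := by rw [hq, range_adjoint' T, hex]
  have hcompl : IsCompl p q := by
    rw [hq_eq]; exact Submodule.isCompl_orthogonal_of_hasOrthogonalProjection
  have hfp : ∀ x : V, f x ∈ p := fun x => ⟨adjoint S x, rfl⟩
  have hgq : ∀ x : V, g x ∈ q := fun x => ⟨T x, rfl⟩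
  have hg0 : ∀ x ∈ p, g x = 0 := by
    rintro _ ⟨y, rfl⟩
    have hTy : T (S y) = 0 := by
      have := congrArg (fun m => m y) hTS
      simpa using this
    show adjoint T (T (S y)) = 0
    rw [hTy, map_zero]
  have hf0 : ∀ x ∈ q, f x = 0 := by
    intro x hx
    have hx' : x ∈ ker (adjoint S) := by
      rw [ker_adjoint' S, ← hp, ← hq_eq]; exact hx
    show S (adjoint S x) = 0
    rw [LinearMap.mem_ker.mp hx', map_zero]
  -- powers
  obtain ⟨a', rfl⟩ : ∃ a', a = a' + 1 := ⟨a - 1, (Nat.succ_pred_eq_of_pos ha).symm⟩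
  obtain ⟨b', rfl⟩ : ∃ b', b = b' + 1 := ⟨b - 1, (Nat.succ_pred_eq_of_pos hb).symm⟩
  have hfa : ∀ x : V, (f ^ (a' + 1)) x ∈ p := by
    intro x; rw [pow_succ', Module.End.mul_apply]; exact hfp _
  have hgb : ∀ x : V, (g ^ (b' + 1)) x ∈ q := by
    intro x; rw [pow_succ', Module.End.mul_apply]; exact hgq _
  have hga0 : ∀ x ∈ p, (g ^ (b' + 1)) x = 0 := by
    intro x hx; rw [pow_succ, Module.End.mul_apply, hg0 x hx, map_zero]
  have hfb0 : ∀ x ∈ q, (f ^ (a' + 1)) x = 0 := by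
    intro x hx; rw [pow_succ, Module.End.mul_apply, hf0 x hx, map_zero]
  set Δ := f ^ (a' + 1) + g ^ (b' + 1) with hΔ
  have hΔp : ∀ x ∈ p, Δ x ∈ p := by
    intro x hx
    rw [hΔ, LinearMap.add_apply, hga0 x hx, add_zero]; exact hfa x
  have hΔq : ∀ x ∈ q, Δ x ∈ q := by
    intro x hx
    rw [hΔ, LinearMap.add_apply, hfb0 x hx, zero_add]; exact hgb x
  rw [det_isCompl' hcompl Δ hΔp hΔq]
  -- identify restrictions
  have hfpp : ∀ x ∈ p, f x ∈ p := fun x _ => hfp x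
  have hgqq : ∀ x ∈ q, g x ∈ q := fun x _ => hgq x
  have hrp : Δ.restrict hΔp = (f.restrict hfpp) ^ (a' + 1) := by
    rw [Module.End.pow_restrict]
    apply LinearMap.ext; intro x
    apply Subtype.ext
    rw [LinearMap.restrict_coe_apply, LinearMap.restrict_coe_apply, hΔ,
      LinearMap.add_apply, hga0 _ x.2, add_zero]
  have hrq : Δ.restrict hΔq = (g.restrict hgqq) ^ (b' + 1) := by
    rw [Module.End.pow_restrict]
    apply LinearMap.ext; intro x
    apply Subtype.ext
    rw [LinearMap.restrict_coe_apply, LinearMap.restrict_coe_apply, hΔ,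
      LinearMap.add_apply, hfb0 _ x.2, zero_add]
  rw [hrp, hrq, map_pow, map_pow]
  congr 2
  · have h1 : ∀ x ∈ range S, (S ∘ₗ adjoint S) x ∈ range S := fun x _ => hfp x
    have := det_restrict_comm S h1 hS
    exact this

lemma t_pos (S : U →ₗ[ℂ] V)
    (hS : ∀ x ∈ range (adjoint S), ((adjoint S).comp S) x ∈ range (adjoint S)) :
    ∃ r : ℝ, 0 < r ∧ LinearMap.det (((adjoint S).comp S).restrict hS) = (r : ℂ) := by
  apply det_pos_of_posdef
  · intro x y
    rw [Submodule.coe_inner, Submodule.coe_inner, LinearMap.restrict_coe_apply,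
      LinearMap.restrict_coe_apply, LinearMap.comp_apply, LinearMap.comp_apply,
      LinearMap.adjoint_inner_left, LinearMap.adjoint_inner_right]
  · intro x hx
    have hSx : S (x : U) ≠ 0 := by
      intro h0
      apply hx
      have hmem : (x : U) ∈ (ker S)ᗮ := by rw [← range_adjoint']; exact x.2
      have : inner ℂ ((x : U)) ((x : U)) = 0 := by
        rw [← inner_conj_symm,
          (Submodule.mem_orthogonal (ker S) (x : U)).mp hmem (x : U) (LinearMap.mem_ker.mpr h0),
          map_zero]
      exact Subtype.ext (inner_self_eq_zero.mp this)
    rw [Submodule.coe_inner, LinearMap.restrict_coe_apply, LinearMap.comp_apply,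
      LinearMap.adjoint_inner_left]
    have : Complex.re (inner ℂ (S (x : U)) (S (x : U))) = ‖S (x : U)‖ ^ 2 :=
      inner_self_eq_norm_sq (𝕜 := ℂ) _
    rw [this]
    exact pow_pos (norm_pos_iff.mpr hSx) 2

lemma t_one (S : U →ₗ[ℂ] V) [Subsingleton U]
    (hS : ∀ x ∈ range (adjoint S), ((adjoint S).comp S) x ∈ range (adjoint S)) :
    LinearMap.det (((adjoint S).comp S).restrict hS) = 1 := by
  haveI : Subsingleton (range (adjoint S)) := ⟨fun x y => Subtype.ext (Subsingleton.elim _ _)⟩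
  exact LinearMap.det_eq_one_of_subsingleton _
end Delta


set_option maxHeartbeats 1000000 in
/-- Let `(C, D)` be a finite acyclic complex of finite-dimensional complex inner product
spaces, indexed so that `D i : C i → C (i+1)`; writing `q = i + 1`, the Rumin–Seshadri
operator on `C q` is `Δ_q = (D_{q−1} D_{q−1}^*)^{a_{q−1}} + (D_q^* D_q)^{a_q}`, and
`L^q = range(D_q^*)`.  Fixing integers `N_q` with `N_{q+1} − N_q = k_q`, the telescoping
identity
`∏_q det(Δ_q)^{(−1)^q N_q} = (∏_q det(D_q^* D_q | L^q)^{(−1)^q})^{−κ}`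
holds, and both sides are positive real numbers. -/
theorem stmt19
    (C : ℤ → Type)
    [∀ i, NormedAddCommGroup (C i)] [∀ i, InnerProductSpace ℂ (C i)]
    [∀ i, FiniteDimensional ℂ (C i)]
    (hfin : {i : ℤ | Nontrivial (C i)}.Finite)
    (D : ∀ i, C i →ₗ[ℂ] C (i + 1))
    (hcomp : ∀ i, (D (i + 1)).comp (D i) = 0)
    (hexact : ∀ i, LinearMap.ker (D (i + 1)) = LinearMap.range (D i))
    (k a : ℤ → ℕ) (hk : ∀ i, 0 < k i) (ha : ∀ i, 0 < a i)
    (κ : ℕ) (hκ : ∀ i, k i * a i = κ)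
    (N : ℤ → ℤ) (hN : ∀ i, N (i + 1) - N i = (k i : ℤ)) :
    (∏ᶠ i : ℤ,
        LinearMap.det
            (((D i).comp (LinearMap.adjoint (D i))) ^ a i +
              ((LinearMap.adjoint (D (i + 1))).comp (D (i + 1))) ^ a (i + 1)) ^
          ((((i + 1).negOnePow : ℤˣ) : ℤ) * N (i + 1))) =
      (∏ᶠ i : ℤ,
          LinearMap.det
              (((LinearMap.adjoint (D i)).comp (D i)).restrict
                (p := LinearMap.range (LinearMap.adjoint (D i)))
                (q := LinearMap.range (LinearMap.adjoint (D i)))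
                (fun x _ => LinearMap.mem_range.mpr ⟨D i x, rfl⟩)) ^
            (((i.negOnePow : ℤˣ) : ℤ))) ^ (-(κ : ℤ)) ∧
      ∃ r : ℝ, 0 < r ∧
        (∏ᶠ i : ℤ,
            LinearMap.det
                (((D i).comp (LinearMap.adjoint (D i))) ^ a i +
                  ((LinearMap.adjoint (D (i + 1))).comp (D (i + 1))) ^ a (i + 1)) ^
              ((((i + 1).negOnePow : ℤˣ) : ℤ) * N (i + 1))) = (r : ℂ) := by
  classical
  set t : ℤ → ℂ := fun i =>
    LinearMap.det (((LinearMap.adjoint (D i)).comp (D i)).restrict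
      (p := LinearMap.range (LinearMap.adjoint (D i)))
      (q := LinearMap.range (LinearMap.adjoint (D i)))
      (fun x _ => LinearMap.mem_range.mpr ⟨D i x, rfl⟩)) with htdef
  have htpos : ∀ i, ∃ r : ℝ, 0 < r ∧ t i = (r : ℂ) := fun i => t_pos (D i) _
  choose τ hτpos hτ using htpos
  have ht1 : ∀ i, ¬ Nontrivial (C i) → t i = 1 := by
    intro i h
    haveI : Subsingleton (C i) := not_nontrivial_iff_subsingleton.mp h
    exact t_one (D i) _
  have hτ1 : ∀ i, ¬ Nontrivial (C i) → τ i = 1 := by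
    intro i h
    have h2 : ((τ i : ℝ) : ℂ) = ((1 : ℝ) : ℂ) := by rw [← hτ i, ht1 i h]; norm_num
    exact_mod_cast h2
  set ε : ℤ → ℤ := fun i => ((i.negOnePow : ℤˣ) : ℤ) with hε
  have hεsucc : ∀ i, ε (i + 1) = - ε i := by
    intro i
    simp only [hε, Int.negOnePow_succ, Units.val_neg]
  set υ : ℤ → ℝˣ := fun i => Units.mk0 (τ i) (hτpos i).ne' with hυ
  have hυval : ∀ i, ((υ i : ℝ) : ℂ) = t i := fun i => (hτ i).symm
  have hυ1 : ∀ i, ¬ Nontrivial (C i) → υ i = 1 := fun i h =>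
    Units.ext (by simp [hυ, hτ1 i h])
  set ψ : ℝˣ →* ℂ := Complex.ofRealHom.toMonoidHom.comp (Units.coeHom ℝ) with hψ
  have hψval : ∀ x : ℝˣ, ψ x = ((x : ℝ) : ℂ) := fun x => rfl
  have hψz : ∀ (x : ℝˣ) (c : ℤ), ψ (x ^ c) = ψ x ^ c := by
    intro x c
    rw [hψval, hψval, Units.val_zpow_eq_zpow_val, Complex.ofReal_zpow]
  set B : Set ℤ := {i | Nontrivial (C i)} ∪ (fun i => i - 1) '' {i | Nontrivial (C i)} with hB
  have hBfin : B.Finite := hfin.union (hfin.image _)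
  have hmemB : ∀ i ∉ B, ¬ Nontrivial (C i) ∧ ¬ Nontrivial (C (i + 1)) := by
    intro i hi
    constructor
    · exact fun h => hi (Or.inl h)
    · exact fun h => hi (Or.inr ⟨i + 1, h, by ring⟩)
  set H : ℤ → ℝˣ := fun i => (υ i ^ a i) ^ (ε (i + 1) * N (i + 1)) with hH
  set J : ℤ → ℝˣ := fun j => (υ j ^ a j) ^ (ε j * N j) with hJ
  set G : ℤ → ℝˣ := fun i => υ i ^ ε i with hG
  set F : ℤ → ℝˣ := fun i => (υ i ^ a i * υ (i + 1) ^ a (i + 1)) ^ (ε (i + 1) * N (i + 1))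
    with hF
  have hsH : Function.mulSupport H ⊆ B := by
    intro i hi
    by_contra hB'
    exact hi (by simp [hH, hυ1 i (fun h => hB' (Or.inl h))])
  have hsJ : Function.mulSupport J ⊆ B := by
    intro i hi
    by_contra hB'
    exact hi (by simp [hJ, hυ1 i (fun h => hB' (Or.inl h))])
  have hsJ' : Function.mulSupport (fun i => J (i + 1)) ⊆ B := by
    intro i hi
    by_contra hB'
    exact hi (by simp [hJ, hυ1 (i + 1) (hmemB i hB').2])
  have hsG : Function.mulSupport G ⊆ B := by
    intro i hi
    by_contra hB'
    exact hi (by simp [hG, hυ1 i (fun h => hB' (Or.inl h))])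
  have hsF : Function.mulSupport F ⊆ B := by
    intro i hi
    by_contra hB'
    exact hi (by simp [hF, hυ1 i (hmemB i hB').1, hυ1 (i + 1) (hmemB i hB').2])
  -- per-index determinant formula
  have hdet : ∀ i : ℤ,
      LinearMap.det
          (((D i).comp (LinearMap.adjoint (D i))) ^ a i +
            ((LinearMap.adjoint (D (i + 1))).comp (D (i + 1))) ^ a (i + 1)) =
        ψ (υ i ^ a i * υ (i + 1) ^ a (i + 1)) := by
    intro i
    have hstep : LinearMap.det
        (((D i).comp (LinearMap.adjoint (D i))) ^ a i +
          ((LinearMap.adjoint (D (i + 1))).comp (D (i + 1))) ^ a (i + 1)) =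
        t i ^ a i * t (i + 1) ^ a (i + 1) :=
      det_delta (D i) (D (i + 1)) (hcomp i) (hexact i) (ha i) (ha (i + 1))
        (fun x _ => LinearMap.mem_range.mpr ⟨D i x, rfl⟩)
        (fun x _ => LinearMap.mem_range.mpr ⟨D (i + 1) x, rfl⟩)
    rw [hstep, map_mul, map_pow, map_pow, hψval, hψval, hυval, hυval]
  -- bridge for LHS
  have hLHS : (∏ᶠ i : ℤ,
      LinearMap.det
          (((D i).comp (LinearMap.adjoint (D i))) ^ a i +
            ((LinearMap.adjoint (D (i + 1))).comp (D (i + 1))) ^ a (i + 1)) ^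
        ((((i + 1).negOnePow : ℤˣ) : ℤ) * N (i + 1))) = ψ (∏ᶠ i, F i) := by
    rw [MonoidHom.map_finprod ψ (hBfin.subset hsF)]
    refine finprod_congr fun i => ?_
    rw [hdet i, ← hψz]
  -- telescoping
  have h1 : ∏ᶠ i, F i = (∏ᶠ i, H i) * ∏ᶠ i, J (i + 1) := by
    rw [← finprod_mul_distrib (hBfin.subset hsH) (hBfin.subset hsJ')]
    exact finprod_congr fun i => mul_zpow _ _ _
  have h2 : ∏ᶠ i, J (i + 1) = ∏ᶠ i, J i :=
    finprod_eq_of_bijective (· + 1) (Equiv.addRight (1 : ℤ)).bijective (fun i => rfl)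
  have h3 : (∏ᶠ i, H i) * (∏ᶠ i, J i) = ∏ᶠ i, H i * J i :=
    (finprod_mul_distrib (hBfin.subset hsH) (hBfin.subset hsJ)).symm
  have h4 : ∀ i, H i * J i = G i ^ (-(κ : ℤ)) := by
    intro i
    rw [hH, hJ, hG, ← zpow_add (υ i ^ a i)]
    have hexp : ε (i + 1) * N (i + 1) + ε i * N i = ε i * (-(k i : ℤ)) := by
      rw [hεsucc i]
      linear_combination (-(ε i)) * hN i
    rw [hexp, ← zpow_natCast (υ i) (a i), ← zpow_mul, ← zpow_mul]
    congr 1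
    have hak : (k i : ℤ) * (a i : ℤ) = (κ : ℤ) := by exact_mod_cast hκ i
    linear_combination (-(ε i)) * hak
  have h5 : ∏ᶠ i, G i ^ (-(κ : ℤ)) = (∏ᶠ i, G i) ^ (-(κ : ℤ)) :=
    ((zpowGroupHom (-(κ : ℤ)) : ℝˣ →* ℝˣ).map_finprod (hBfin.subset hsG)).symm
  have htele : ∏ᶠ i, F i = (∏ᶠ i, G i) ^ (-(κ : ℤ)) := by
    rw [h1, h2, h3, finprod_congr h4, h5]
  -- bridge for RHS
  have hRHS : (∏ᶠ i : ℤ,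
      LinearMap.det
          (((LinearMap.adjoint (D i)).comp (D i)).restrict
            (p := LinearMap.range (LinearMap.adjoint (D i)))
            (q := LinearMap.range (LinearMap.adjoint (D i)))
            (fun x _ => LinearMap.mem_range.mpr ⟨D i x, rfl⟩)) ^
        (((i.negOnePow : ℤˣ) : ℤ))) = ψ (∏ᶠ i, G i) := by
    rw [MonoidHom.map_finprod ψ (hBfin.subset hsG)]
    refine finprod_congr fun i => ?_
    rw [hG]
    rw [hψz, hψval, hυval]
  constructor
  · rw [hLHS, htele, hψz, hRHS]
  · refine ⟨((∏ᶠ i, G i : ℝˣ) : ℝ) ^ (-(κ : ℤ)), ?_, ?_⟩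
    · have hQpos : 0 < ((∏ᶠ i, G i : ℝˣ) : ℝ) := by
        have hco : ((∏ᶠ i, G i : ℝˣ) : ℝ) = ∏ᶠ i, ((G i : ℝ)) :=
          (Units.coeHom ℝ).map_finprod (hBfin.subset hsG)
        rw [hco]
        have hsub : Function.mulSupport (fun i => ((G i : ℝ))) ⊆ ↑hBfin.toFinset := by
          intro i hi
          rw [Set.Finite.coe_toFinset]
          apply hsG
          intro hGi
          exact hi (by simp [hGi])
        rw [finprod_eq_prod_of_mulSupport_subset _ hsub]
        apply Finset.prod_pos
        intro i _
        have : ((G i : ℝ)) = τ i ^ ε i := by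
          rw [hG, Units.val_zpow_eq_zpow_val]; rfl
        rw [this]
        exact zpow_pos (hτpos i) _
      exact zpow_pos hQpos _
    · rw [hLHS, htele, hψz, hψval]
      exact (Complex.ofReal_zpow _ _).symm
end
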